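/- Let λ_i > 0 with Σ λ_i = 1, λ̃_i ≥ 0 with Σ λ̃_i = 1, g_i ∈ ℝ^d, g = Σ λ_i g_i, g̃ = Σ λ̃_i g_i, and suppose Σ_i λ_i ‖g_i − g‖² ≤ σ_g². Let χ² = Σ_i λ̃_i²/λ_i² and χ = Σ_i λ̃_i/λ_i. Then ‖g̃‖² ≤ 2(1 + N + χ² − 2χ) ‖g‖² + 2(N + χ² − 2χ) σ_g², where Σ_i (λ̃_i − λ_i)²/λ_i² = N + χ² − 2χ. -/

import Mathlib

open scoped BigOperators

theorem stmt_10 {d N : ℕ} (lam tlam : Fin N → ℝ)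
    (hlam : ∀ i, 0 < lam i) (hsum : ∑ i, lam i = 1)
    (htlam : ∀ i, 0 ≤ tlam i) (htsum : ∑ i, tlam i = 1)
    (g : Fin N → EuclideanSpace ℝ (Fin d))
    (gbar tgbar : EuclideanSpace ℝ (Fin d))
    (hgbar : gbar = ∑ i, lam i • g i) (htgbar : tgbar = ∑ i, tlam i • g i)
    (σg : ℝ) (hσg : 0 ≤ σg)
    (hvar : ∑ i, lam i * ‖g i - gbar‖ ^ 2 ≤ σg ^ 2)
    (χsq χ : ℝ) (hχsq : χsq = ∑ i, tlam i ^ 2 / lam i ^ 2)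
    (hχ : χ = ∑ i, tlam i / lam i) :
    ‖tgbar‖ ^ 2 ≤ 2 * (1 + N + χsq - 2 * χ) * ‖gbar‖ ^ 2
        + 2 * (N + χsq - 2 * χ) * σg ^ 2 ∧
      ∑ i, (tlam i - lam i) ^ 2 / lam i ^ 2 = N + χsq - 2 * χ := by
  have hlne : ∀ i, lam i ≠ 0 := fun i => (hlam i).ne'
  have hS : ∑ i, (tlam i - lam i) ^ 2 / lam i ^ 2 = N + χsq - 2 * χ := by
    have key : ∀ i, (tlam i - lam i) ^ 2 / lam i ^ 2
        = tlam i ^ 2 / lam i ^ 2 - 2 * (tlam i / lam i) + 1 := by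
      intro i
      have h := hlne i
      field_simp
      ring
    rw [Finset.sum_congr rfl fun i _ => key i]
    rw [Finset.sum_add_distrib, Finset.sum_sub_distrib, ← Finset.mul_sum,
      Finset.sum_const, Finset.card_univ, Fintype.card_fin, nsmul_eq_mul, mul_one]
    rw [hχsq, hχ]; ring
  refine ⟨?_, hS⟩
  set S := ∑ i, (tlam i - lam i) ^ 2 / lam i ^ 2 with hSdef
  have hS0 : 0 ≤ S := Finset.sum_nonneg fun i _ =>
    div_nonneg (sq_nonneg _) (sq_nonneg _)
  have hdelta : tgbar - gbar = ∑ i, (tlam i - lam i) • (g i - gbar) := by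
    simp only [sub_smul, smul_sub, Finset.sum_sub_distrib, ← Finset.sum_smul,
      htsum, hsum, one_smul]
    rw [hgbar, htgbar]
    abel
  have hCS : ‖tgbar - gbar‖ ^ 2 ≤ S * σg ^ 2 := by
    have h1 : ‖tgbar - gbar‖ ≤ ∑ i, |tlam i - lam i| * ‖g i - gbar‖ := by
      rw [hdelta]
      refine (norm_sum_le _ _).trans_eq ?_
      exact Finset.sum_congr rfl fun i _ => by rw [norm_smul, Real.norm_eq_abs]
    have h2 : (∑ i, |tlam i - lam i| * ‖g i - gbar‖) ^ 2
        ≤ (∑ i, (tlam i - lam i) ^ 2 / lam i) * (∑ i, lam i * ‖g i - gbar‖ ^ 2) := by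
      have hcs := Finset.sum_mul_sq_le_sq_mul_sq Finset.univ
        (fun i => |tlam i - lam i| / Real.sqrt (lam i))
        (fun i => Real.sqrt (lam i) * ‖g i - gbar‖)
      have heq : ∀ i : Fin N, |tlam i - lam i| / Real.sqrt (lam i)
          * (Real.sqrt (lam i) * ‖g i - gbar‖) = |tlam i - lam i| * ‖g i - gbar‖ := by
        intro i
        have hs : Real.sqrt (lam i) ≠ 0 := Real.sqrt_ne_zero'.mpr (hlam i)
        field_simp
      calc (∑ i, |tlam i - lam i| * ‖g i - gbar‖) ^ 2
          = (∑ i, |tlam i - lam i| / Real.sqrt (lam i)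
              * (Real.sqrt (lam i) * ‖g i - gbar‖)) ^ 2 := by
            rw [Finset.sum_congr rfl fun i _ => heq i]
        _ ≤ (∑ i, (|tlam i - lam i| / Real.sqrt (lam i)) ^ 2)
            * ∑ i, (Real.sqrt (lam i) * ‖g i - gbar‖) ^ 2 := hcs
        _ = (∑ i, (tlam i - lam i) ^ 2 / lam i) * (∑ i, lam i * ‖g i - gbar‖ ^ 2) := by
            congr 1
            · exact Finset.sum_congr rfl fun i _ => by
                rw [div_pow, sq_abs, Real.sq_sqrt (hlam i).le]
            · exact Finset.sum_congr rfl fun i _ => by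
                rw [mul_pow, Real.sq_sqrt (hlam i).le]
    have h3 : ∑ i, (tlam i - lam i) ^ 2 / lam i ≤ S := by
      refine Finset.sum_le_sum fun i _ => ?_
      have hle1 : lam i ≤ 1 := by
        calc lam i ≤ ∑ j, lam j :=
              Finset.single_le_sum (fun j _ => (hlam j).le) (Finset.mem_univ i)
          _ = 1 := hsum
      have h2le : lam i ^ 2 ≤ lam i := by nlinarith [hlam i]
      exact div_le_div_of_nonneg_left (sq_nonneg _) (pow_pos (hlam i) 2) h2le
    have h4 : 0 ≤ ∑ i, lam i * ‖g i - gbar‖ ^ 2 :=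
      Finset.sum_nonneg fun i _ => mul_nonneg (hlam i).le (sq_nonneg _)
    have habs : 0 ≤ ∑ i, |tlam i - lam i| * ‖g i - gbar‖ :=
      Finset.sum_nonneg fun i _ => mul_nonneg (abs_nonneg _) (norm_nonneg _)
    calc ‖tgbar - gbar‖ ^ 2 ≤ (∑ i, |tlam i - lam i| * ‖g i - gbar‖) ^ 2 := by
          nlinarith [norm_nonneg (tgbar - gbar)]
      _ ≤ (∑ i, (tlam i - lam i) ^ 2 / lam i) * (∑ i, lam i * ‖g i - gbar‖ ^ 2) := h2
      _ ≤ S * σg ^ 2 := mul_le_mul h3 hvar h4 hS0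
  have htri : ‖tgbar‖ ^ 2 ≤ 2 * ‖gbar‖ ^ 2 + 2 * ‖tgbar - gbar‖ ^ 2 := by
    have h := norm_add_le gbar (tgbar - gbar)
    rw [add_sub_cancel] at h
    nlinarith [sq_nonneg (‖gbar‖ - ‖tgbar - gbar‖), norm_nonneg tgbar,
      norm_nonneg gbar, norm_nonneg (tgbar - gbar)]
  have hgoal : (1 : ℝ) + N + χsq - 2 * χ = 1 + S := by rw [hS]; ring
  have hS2 : (N : ℝ) + χsq - 2 * χ = S := hS.symm
  rw [hgoal, hS2]
  nlinarith [sq_nonneg ‖gbar‖]
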